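/- With P_j, Q_j, R_j as in the Tarasov recurrence (P₀=Q₀=R₀=1, P_{j+1} = s·R_j + A_j·P_j, Q_{j+1} = P_{j+1} + B_j·Q_j, R_{j+1} = Q_{j+1} + C_j·R_j, with A_j, B_j, C_j > 0), denote the roots of P_j, Q_j, R_j in decreasing order by p_{j1} > ... > p_{jj}, q_{j1} > ... > q_{jj}, r_{j1} > ... > r_{jj}. Then for all j ≥ 1: p_{jk} > q_{jk} > r_{jk} for all k = 1,...,j, and r_{jk} > p_{j,k+1} for all k = 1,...,j−1. -/

import Mathlib

open Polynomial


/-- IVT for polynomials with signs encoded by a parity exponent. -/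
lemma tri_sign_ivt (f : Polynomial ℝ) (m : ℕ) {x y : ℝ} (hxy : x < y)
    (hx : 0 < (-1:ℝ)^(m+1) * f.eval x) (hy : 0 < (-1:ℝ)^m * f.eval y) :
    ∃ z, x < z ∧ z < y ∧ f.IsRoot z := by
  have hcont : ContinuousOn (fun t : ℝ => f.eval t) (Set.Icc x y) :=
    f.continuous.continuousOn
  rcases Nat.even_or_odd m with he | ho
  · have h1 : (-1:ℝ)^m = 1 := he.neg_one_pow
    have h2 : (-1:ℝ)^(m+1) = -1 := by
      rw [pow_succ, h1]; ring
    rw [h2] at hx; rw [h1] at hy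
    have hx' : f.eval x < 0 := by linarith
    have hy' : 0 < f.eval y := by linarith
    have := intermediate_value_Ioo (le_of_lt hxy) hcont
    have h0 : (0:ℝ) ∈ Set.Ioo (f.eval x) (f.eval y) := ⟨hx', hy'⟩
    obtain ⟨z, hz, hz0⟩ := this h0
    exact ⟨z, hz.1, hz.2, hz0⟩
  · have h1 : (-1:ℝ)^m = -1 := ho.neg_one_pow
    have h2 : (-1:ℝ)^(m+1) = 1 := by
      rw [pow_succ, h1]; ring
    rw [h2] at hx; rw [h1] at hy
    have hx' : 0 < f.eval x := by linarith
    have hy' : f.eval y < 0 := by linarith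
    have := intermediate_value_Ioo' (le_of_lt hxy) hcont
    have h0 : (0:ℝ) ∈ Set.Ioo (f.eval y) (f.eval x) := ⟨hy', hx'⟩
    obtain ⟨z, hz, hz0⟩ := this h0
    exact ⟨z, hz.1, hz.2, hz0⟩

/-- Sign of a real product of linear factors. -/
lemma tri_sign_prod_eval (n m : ℕ) (ρ : ℕ → ℝ) (x : ℝ) (hm : m ≤ n)
    (h1 : ∀ k, 1 ≤ k → k ≤ m → x < ρ k) (h2 : ∀ k, m + 1 ≤ k → k ≤ n → ρ k < x) :
    0 < (-1:ℝ)^m * ∏ k ∈ Finset.Icc 1 n, (x - ρ k) := by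
  have hIcc : Finset.Icc 1 n = Finset.Ioc 0 n := by
    rw [← Finset.Icc_add_one_left_eq_Ioc, zero_add]
  rw [hIcc, ← Finset.prod_Ioc_consecutive _ (Nat.zero_le m) hm]
  have hA : ∏ k ∈ Finset.Ioc 0 m, (ρ k - x)
      = (-1:ℝ)^m * ∏ k ∈ Finset.Ioc 0 m, (x - ρ k) := by
    have e : ∏ k ∈ Finset.Ioc 0 m, (ρ k - x)
        = ∏ k ∈ Finset.Ioc 0 m, ((-1) * (x - ρ k)) :=
      Finset.prod_congr rfl (fun k _ => by ring)
    rw [e, Finset.prod_mul_distrib, Finset.prod_const, Nat.card_Ioc, Nat.sub_zero]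
  have hApos : 0 < ∏ k ∈ Finset.Ioc 0 m, (ρ k - x) := by
    apply Finset.prod_pos
    intro k hk
    rw [Finset.mem_Ioc] at hk
    have := h1 k (by omega) hk.2
    linarith
  have hBpos : 0 < ∏ k ∈ Finset.Ioc m n, (x - ρ k) := by
    apply Finset.prod_pos
    intro k hk
    rw [Finset.mem_Ioc] at hk
    have := h2 k (by omega) hk.2
    linarith
  have key : (-1:ℝ)^m * ((∏ k ∈ Finset.Ioc 0 m, (x - ρ k)) * ∏ k ∈ Finset.Ioc m n, (x - ρ k))
      = (∏ k ∈ Finset.Ioc 0 m, (ρ k - x)) * ∏ k ∈ Finset.Ioc m n, (x - ρ k) := by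
    rw [hA]; ring
  rw [key]
  exact mul_pos hApos hBpos

/-- If decreasing values `z` are all among the decreasingly-enumerated `ρ`,
then they coincide. -/
lemma tri_pin_aux (n : ℕ) (ρ z : ℕ → ℝ)
    (hρdec : ∀ k l, 1 ≤ k → k < l → l ≤ n → ρ l < ρ k)
    (hzdec : ∀ k, 1 ≤ k → k + 1 ≤ n → z (k+1) < z k)
    (hmem : ∀ k, ∃ i, 1 ≤ k → k ≤ n → 1 ≤ i ∧ i ≤ n ∧ z k = ρ i) :
    ∀ k, 1 ≤ k → k ≤ n → ρ k = z k := by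
  choose σ hσ using hmem
  have hmono : ∀ k, 1 ≤ k → k + 1 ≤ n → σ k < σ (k+1) := by
    intro k hk hk1
    obtain ⟨a1, a2, a3⟩ := hσ k hk (by omega)
    obtain ⟨b1, b2, b3⟩ := hσ (k+1) (by omega) hk1
    by_contra hle
    push_neg at hle
    have hz := hzdec k hk hk1
    rcases eq_or_lt_of_le hle with h | h
    · rw [a3, b3, h] at hz; linarith
    · have := hρdec (σ (k+1)) (σ k) b1 h a2
      rw [a3, b3] at hz; linarith
  have hge : ∀ k, 1 ≤ k → k ≤ n → k ≤ σ k := by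
    intro k
    induction k with
    | zero => omega
    | succ i ih =>
      intro h1 h2
      by_cases hi : 1 ≤ i
      · have g1 := ih hi (by omega)
        have g2 := hmono i hi h2
        omega
      · have : i = 0 := by omega
        subst this
        exact (hσ 1 le_rfl h2).1
  have hle : ∀ d k, 1 ≤ k → k + d ≤ n → σ k + d ≤ n := by
    intro d
    induction d with
    | zero =>
      intro k h1 h2
      simpa using (hσ k h1 (by omega)).2.1
    | succ i ih =>
      intro k h1 h2
      have hs := hmono k h1 (by omega)
      have := ih (k+1) (by omega) (by omega)
      omega
  intro k hk1 hk2
  have e := (hσ k hk1 hk2).2.2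
  have g1 := hge k hk1 hk2
  have g2 := hle (n - k) k hk1 (by omega)
  have hσk : σ k = k := by omega
  rw [e, hσk]

lemma tri_monic_add_C_mul (f g : Polynomial ℝ) (n : ℕ) (e : ℝ)
    (hf : f.Monic) (hfd : f.natDegree = n + 1) (hgd : g.natDegree ≤ n) :
    (f + C e * g).Monic ∧ (f + C e * g).natDegree = n + 1 := by
  have hdf : f.degree = ((n + 1 : ℕ) : WithBot ℕ) := by
    rw [Polynomial.degree_eq_natDegree hf.ne_zero, hfd]
  have hlt : (C e * g).degree < f.degree := by
    rcases eq_or_ne (C e * g) 0 with h0 | h0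
    · rw [h0, Polynomial.degree_zero, hdf]
      exact WithBot.bot_lt_coe _
    · have h1 : (C e * g).degree ≤ ((n : ℕ) : WithBot ℕ) := by
        refine le_trans (Polynomial.degree_mul_le _ _) ?_
        have hce : (C e).degree ≤ 0 := Polynomial.degree_C_le
        have hg2 : g.degree ≤ ((n : ℕ) : WithBot ℕ) :=
          le_trans Polynomial.degree_le_natDegree (by exact_mod_cast hgd)
        calc (C e).degree + g.degree ≤ 0 + ((n : ℕ) : WithBot ℕ) := add_le_add hce hg2
          _ = ((n : ℕ) : WithBot ℕ) := by rw [zero_add]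
      rw [hdf]
      refine lt_of_le_of_lt h1 ?_
      exact_mod_cast Nat.lt_succ_self n
  refine ⟨hf.add_of_left hlt, ?_⟩
  have hdeg := Polynomial.degree_add_eq_left_of_degree_lt hlt
  exact Polynomial.natDegree_eq_of_degree_eq_some (by rw [hdeg, hdf])

lemma tri_monic_eq_prod (f : Polynomial ℝ) (n : ℕ) (ρ : ℕ → ℝ)
    (hf : f.Monic) (hdeg : f.natDegree = n)
    (hroot : ∀ k, 1 ≤ k → k ≤ n → f.IsRoot (ρ k))
    (hdec : ∀ k l, 1 ≤ k → k < l → l ≤ n → ρ l < ρ k) :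
    f = ∏ k ∈ Finset.Icc 1 n, (X - C (ρ k)) := by
  set s : Multiset ℝ := (Finset.Icc 1 n).val.map ρ with hs
  have hnodup : s.Nodup := by
    refine Multiset.Nodup.map_on ?_ (Finset.Icc 1 n).nodup
    intro k hk l hl he
    rw [Finset.mem_val, Finset.mem_Icc] at hk hl
    by_contra hne
    rcases Nat.lt_or_ge k l with h | h
    · exact absurd he (ne_of_gt (hdec k l hk.1 h hl.2))
    · have h' : l < k := by omega
      exact absurd he.symm (ne_of_gt (hdec l k hl.1 h' hk.2))
  have hsub : s ≤ f.roots := by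
    rw [Multiset.le_iff_subset hnodup]
    intro x hx
    rw [hs] at hx
    obtain ⟨k, hk, rfl⟩ := Multiset.mem_map.mp hx
    rw [Finset.mem_val, Finset.mem_Icc] at hk
    rw [Polynomial.mem_roots hf.ne_zero]
    exact hroot k hk.1 hk.2
  have hdvd : (s.map (fun u => X - C u)).prod ∣ f :=
    dvd_trans (Multiset.prod_dvd_prod_of_le (Multiset.map_le_map hsub))
      (prod_multiset_X_sub_C_dvd f)
  have hprodeq : ∏ k ∈ Finset.Icc 1 n, (X - C (ρ k)) = (s.map (fun u => X - C u)).prod := by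
    rw [hs, Multiset.map_map]
    rfl
  set g := ∏ k ∈ Finset.Icc 1 n, (X - C (ρ k)) with hg
  have hgm : g.Monic := monic_prod_of_monic _ _ fun k _ => monic_X_sub_C _
  have hgd : g.natDegree = n := by
    rw [hg, Polynomial.natDegree_prod _ _ (fun k _ => X_sub_C_ne_zero (ρ k))]
    simp [Polynomial.natDegree_X_sub_C]
  rw [← hprodeq] at hdvd
  obtain ⟨u, hu⟩ := hdvd
  have hu0 : u ≠ 0 := by
    rintro rfl
    rw [mul_zero] at hu
    exact hf.ne_zero hu
  have hdu : u.natDegree = 0 := by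
    have := Polynomial.natDegree_mul hgm.ne_zero hu0
    rw [← hu, hdeg, hgd] at this
    omega
  have huC : u = C (u.coeff 0) := Polynomial.eq_C_of_natDegree_eq_zero hdu
  have hlc : u.coeff 0 = 1 := by
    have hl := congrArg Polynomial.leadingCoeff hu
    rw [hf.leadingCoeff, Polynomial.leadingCoeff_mul, hgm.leadingCoeff, one_mul] at hl
    rw [Polynomial.leadingCoeff, hdu] at hl
    exact hl.symm
  rw [hu, huC, hlc, map_one, mul_one]

lemma tri_locate (n : ℕ) (f : Polynomial ℝ) (ρ Lb Ub : ℕ → ℝ)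
    (hall : ∀ x : ℝ, f.IsRoot x → ∃ i, 1 ≤ i ∧ i ≤ n ∧ x = ρ i)
    (hρdec : ∀ k l, 1 ≤ k → k < l → l ≤ n → ρ l < ρ k)
    (hLU : ∀ k, 1 ≤ k → k ≤ n → Lb k < Ub k)
    (hsep : ∀ k, 1 ≤ k → k + 1 ≤ n → Ub (k+1) ≤ Lb k)
    (hsL : ∀ k, 1 ≤ k → k ≤ n → 0 < (-1:ℝ)^k * f.eval (Lb k))
    (hsU : ∀ k, 1 ≤ k → k ≤ n → 0 < (-1:ℝ)^(k-1) * f.eval (Ub k)) :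
    ∀ k, 1 ≤ k → k ≤ n → Lb k < ρ k ∧ ρ k < Ub k := by
  have hz : ∀ k, ∃ zv, 1 ≤ k → k ≤ n → f.IsRoot zv ∧ Lb k < zv ∧ zv < Ub k := by
    intro k
    by_cases h : 1 ≤ k ∧ k ≤ n
    · obtain ⟨hk1, hk2⟩ := h
      have hx : 0 < (-1:ℝ)^((k-1)+1) * f.eval (Lb k) := by
        rw [Nat.sub_add_cancel hk1]
        exact hsL k hk1 hk2
      obtain ⟨z, hz1, hz2, hz3⟩ := tri_sign_ivt f (k-1) (hLU k hk1 hk2) hx (hsU k hk1 hk2)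
      exact ⟨z, fun _ _ => ⟨hz3, hz1, hz2⟩⟩
    · exact ⟨0, fun h1 h2 => absurd ⟨h1, h2⟩ h⟩
  choose z hzp using hz
  have hzdec : ∀ k, 1 ≤ k → k + 1 ≤ n → z (k+1) < z k := by
    intro k hk hk1
    have a1 := (hzp (k+1) (by omega) hk1).2.2
    have a2 := (hzp k hk (by omega)).2.1
    have a3 := hsep k hk hk1
    linarith
  have hmem : ∀ k, ∃ i, 1 ≤ k → k ≤ n → 1 ≤ i ∧ i ≤ n ∧ z k = ρ i := by
    intro k
    by_cases h : 1 ≤ k ∧ k ≤ n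
    · obtain ⟨i, hi⟩ := hall (z k) (hzp k h.1 h.2).1
      exact ⟨i, fun _ _ => hi⟩
    · exact ⟨1, fun h1 h2 => absurd ⟨h1, h2⟩ h⟩
  have hpin := tri_pin_aux n ρ z hρdec hzdec hmem
  intro k hk1 hk2
  rw [hpin k hk1 hk2]
  exact ⟨(hzp k hk1 hk2).2.1, (hzp k hk1 hk2).2.2⟩

/-- Interlacing of the roots of the polynomials of Tarasov's recurrence
(Proposition 9.1): if p j k, q j k, r j k (1 ≤ k ≤ j) enumerate the roots of
P j, Q j, R j in strictly decreasing order, then p_{jk} > q_{jk} > r_{jk} for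
all k = 1,…,j and r_{jk} > p_{j,k+1} for all k = 1,…,j−1. -/
theorem tarasov_roots_interlace (a b c : ℕ → ℝ)
    (ha : ∀ j, 0 < a j) (hb : ∀ j, 0 < b j) (hc : ∀ j, 0 < c j)
    (P Q R : ℕ → Polynomial ℝ)
    (hP0 : P 0 = 1) (hQ0 : Q 0 = 1) (hR0 : R 0 = 1)
    (hP : ∀ j, P (j + 1) = X * R j + C (a j) * P j)
    (hQ : ∀ j, Q (j + 1) = P (j + 1) + C (b j) * Q j)
    (hR : ∀ j, R (j + 1) = Q (j + 1) + C (c j) * R j)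
    (p q r : ℕ → ℕ → ℝ)
    (hproot : ∀ j, 1 ≤ j → ∀ k, 1 ≤ k → k ≤ j → (P j).IsRoot (p j k))
    (hqroot : ∀ j, 1 ≤ j → ∀ k, 1 ≤ k → k ≤ j → (Q j).IsRoot (q j k))
    (hrroot : ∀ j, 1 ≤ j → ∀ k, 1 ≤ k → k ≤ j → (R j).IsRoot (r j k))
    (hpdec : ∀ j, 1 ≤ j → ∀ k l, 1 ≤ k → k < l → l ≤ j → p j l < p j k)
    (hqdec : ∀ j, 1 ≤ j → ∀ k l, 1 ≤ k → k < l → l ≤ j → q j l < q j k)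
    (hrdec : ∀ j, 1 ≤ j → ∀ k l, 1 ≤ k → k < l → l ≤ j → r j l < r j k)
    (hpall : ∀ j, 1 ≤ j → ∀ x : ℝ, (P j).IsRoot x → ∃ k, 1 ≤ k ∧ k ≤ j ∧ x = p j k)
    (hqall : ∀ j, 1 ≤ j → ∀ x : ℝ, (Q j).IsRoot x → ∃ k, 1 ≤ k ∧ k ≤ j ∧ x = q j k)
    (hrall : ∀ j, 1 ≤ j → ∀ x : ℝ, (R j).IsRoot x → ∃ k, 1 ≤ k ∧ k ≤ j ∧ x = r j k) :
    ∀ j, 1 ≤ j →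
      (∀ k, 1 ≤ k → k ≤ j → q j k < p j k ∧ r j k < q j k) ∧
      (∀ k, 1 ≤ k → k + 1 ≤ j → p j (k + 1) < r j k) := by
  -- Monicity and degrees
  have hdegs : ∀ j, ((P j).Monic ∧ (P j).natDegree = j) ∧
      ((Q j).Monic ∧ (Q j).natDegree = j) ∧ ((R j).Monic ∧ (R j).natDegree = j) := by
    intro j
    induction j with
    | zero =>
      refine ⟨⟨?_, ?_⟩, ⟨?_, ?_⟩, ⟨?_, ?_⟩⟩ <;> simp [hP0, hQ0, hR0, monic_one]
    | succ m ih =>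
      obtain ⟨⟨mp, dp⟩, ⟨mq, dq⟩, ⟨mr, dr⟩⟩ := ih
      have mx : (X * R m).Monic := monic_X.mul mr
      have dx : (X * R m).natDegree = m + 1 := by
        rw [monic_X.natDegree_mul mr, natDegree_X, dr, Nat.add_comm]
      have hPs : (P (m+1)).Monic ∧ (P (m+1)).natDegree = m + 1 := by
        rw [hP m]
        exact tri_monic_add_C_mul (X * R m) (P m) m (a m) mx dx dp.le
      have hQs : (Q (m+1)).Monic ∧ (Q (m+1)).natDegree = m + 1 := by
        rw [hQ m]
        exact tri_monic_add_C_mul (P (m+1)) (Q m) m (b m) hPs.1 hPs.2 dq.le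
      have hRs : (R (m+1)).Monic ∧ (R (m+1)).natDegree = m + 1 := by
        rw [hR m]
        exact tri_monic_add_C_mul (Q (m+1)) (R m) m (c m) hQs.1 hQs.2 dr.le
      exact ⟨hPs, hQs, hRs⟩
  -- Positivity on [0, ∞)
  have hposall : ∀ j, ∀ x : ℝ, 0 ≤ x →
      0 < (P j).eval x ∧ 0 < (Q j).eval x ∧ 0 < (R j).eval x := by
    intro j
    induction j with
    | zero => intro x hx; simp [hP0, hQ0, hR0]
    | succ m ih =>
      intro x hx
      obtain ⟨h1, h2, h3⟩ := ih x hx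
      have hp' : 0 < (P (m+1)).eval x := by
        rw [hP m]
        simp only [eval_add, eval_mul, eval_X, eval_C]
        have := mul_pos (ha m) h1
        nlinarith
      have hq' : 0 < (Q (m+1)).eval x := by
        rw [hQ m]
        simp only [eval_add, eval_mul, eval_C]
        have := mul_pos (hb m) h2
        linarith
      have hr' : 0 < (R (m+1)).eval x := by
        rw [hR m]
        simp only [eval_add, eval_mul, eval_C]
        have := mul_pos (hc m) h3
        linarith
      exact ⟨hp', hq', hr'⟩
  -- Factorizations
  have hPfac : ∀ j, P j = ∏ k ∈ Finset.Icc 1 j, (X - C (p j k)) := fun j =>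
    tri_monic_eq_prod (P j) j (p j) (hdegs j).1.1 (hdegs j).1.2
      (fun k h1 h2 => hproot j (le_trans h1 h2) k h1 h2)
      (fun k l h1 h2 h3 => hpdec j (by omega) k l h1 h2 h3)
  have hQfac : ∀ j, Q j = ∏ k ∈ Finset.Icc 1 j, (X - C (q j k)) := fun j =>
    tri_monic_eq_prod (Q j) j (q j) (hdegs j).2.1.1 (hdegs j).2.1.2
      (fun k h1 h2 => hqroot j (le_trans h1 h2) k h1 h2)
      (fun k l h1 h2 h3 => hqdec j (by omega) k l h1 h2 h3)
  have hRfac : ∀ j, R j = ∏ k ∈ Finset.Icc 1 j, (X - C (r j k)) := fun j =>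
    tri_monic_eq_prod (R j) j (r j) (hdegs j).2.2.1 (hdegs j).2.2.2
      (fun k h1 h2 => hrroot j (le_trans h1 h2) k h1 h2)
      (fun k l h1 h2 h3 => hrdec j (by omega) k l h1 h2 h3)
  -- Sign lemmas
  have sgnP : ∀ jj mm (x : ℝ), mm ≤ jj → (∀ k, 1 ≤ k → k ≤ mm → x < p jj k) →
      (∀ k, mm + 1 ≤ k → k ≤ jj → p jj k < x) → 0 < (-1:ℝ)^mm * (P jj).eval x := by
    intro jj mm x hm h1 h2
    have : (P jj).eval x = ∏ k ∈ Finset.Icc 1 jj, (x - p jj k) := by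
      rw [hPfac jj]; simp [Polynomial.eval_prod]
    rw [this]
    exact tri_sign_prod_eval jj mm (p jj) x hm h1 h2
  have sgnQ : ∀ jj mm (x : ℝ), mm ≤ jj → (∀ k, 1 ≤ k → k ≤ mm → x < q jj k) →
      (∀ k, mm + 1 ≤ k → k ≤ jj → q jj k < x) → 0 < (-1:ℝ)^mm * (Q jj).eval x := by
    intro jj mm x hm h1 h2
    have : (Q jj).eval x = ∏ k ∈ Finset.Icc 1 jj, (x - q jj k) := by
      rw [hQfac jj]; simp [Polynomial.eval_prod]
    rw [this]
    exact tri_sign_prod_eval jj mm (q jj) x hm h1 h2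
  have sgnR : ∀ jj mm (x : ℝ), mm ≤ jj → (∀ k, 1 ≤ k → k ≤ mm → x < r jj k) →
      (∀ k, mm + 1 ≤ k → k ≤ jj → r jj k < x) → 0 < (-1:ℝ)^mm * (R jj).eval x := by
    intro jj mm x hm h1 h2
    have : (R jj).eval x = ∏ k ∈ Finset.Icc 1 jj, (x - r jj k) := by
      rw [hRfac jj]; simp [Polynomial.eval_prod]
    rw [this]
    exact tri_sign_prod_eval jj mm (r jj) x hm h1 h2
  -- Main induction
  have main : ∀ j, 1 ≤ j → p j 1 < 0 ∧
      (∀ k, 1 ≤ k → k ≤ j → q j k < p j k ∧ r j k < q j k) ∧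
      (∀ k, 1 ≤ k → k + 1 ≤ j → p j (k + 1) < r j k) := by
    intro j hj
    induction j, hj using Nat.le_induction with
    | base =>
      have hp11 : p 1 1 = -(a 0) := by
        have h := hproot 1 le_rfl 1 le_rfl le_rfl
        rw [hP 0, hP0, hR0] at h
        simp [Polynomial.IsRoot] at h
        linarith
      have hq11 : q 1 1 = -(a 0 + b 0) := by
        have h := hqroot 1 le_rfl 1 le_rfl le_rfl
        rw [hQ 0, hP 0, hP0, hQ0, hR0] at h
        simp [Polynomial.IsRoot] at h
        linarith
      have hr11 : r 1 1 = -(a 0 + b 0 + c 0) := by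
        have h := hrroot 1 le_rfl 1 le_rfl le_rfl
        rw [hR 0, hQ 0, hP 0, hP0, hQ0, hR0] at h
        simp [Polynomial.IsRoot] at h
        linarith
      have h0 := ha 0; have h1 := hb 0; have h2 := hc 0
      refine ⟨by rw [hp11]; linarith, ?_, by omega⟩
      intro k hk1 hk2
      have : k = 1 := by omega
      subst this
      rw [hp11, hq11, hr11]
      constructor <;> linarith
    | succ m hm ih =>
      obtain ⟨hp1neg, hqp, hpr⟩ := ih
      -- helpers at level m
      have hple : ∀ k l, 1 ≤ k → k ≤ l → l ≤ m → p m l ≤ p m k := by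
        intro k l h1 h2 h3
        rcases eq_or_lt_of_le h2 with h | h
        · rw [h]
        · exact (hpdec m hm k l h1 h h3).le
      have hqle : ∀ k l, 1 ≤ k → k ≤ l → l ≤ m → q m l ≤ q m k := by
        intro k l h1 h2 h3
        rcases eq_or_lt_of_le h2 with h | h
        · rw [h]
        · exact (hqdec m hm k l h1 h h3).le
      have hrle : ∀ k l, 1 ≤ k → k ≤ l → l ≤ m → r m l ≤ r m k := by
        intro k l h1 h2 h3
        rcases eq_or_lt_of_le h2 with h | h
        · rw [h]
        · exact (hrdec m hm k l h1 h h3).le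
      have hpneg : ∀ k, 1 ≤ k → k ≤ m → p m k < 0 :=
        fun k h1 h2 => lt_of_le_of_lt (hple 1 k le_rfl h1 h2) hp1neg
      have hqneg : ∀ k, 1 ≤ k → k ≤ m → q m k < 0 :=
        fun k h1 h2 => lt_trans (hqp k h1 h2).1 (hpneg k h1 h2)
      have hrneg : ∀ k, 1 ≤ k → k ≤ m → r m k < 0 :=
        fun k h1 h2 => lt_trans (hqp k h1 h2).2 (hqneg k h1 h2)
      -- sign facts at level m
      have sPr : ∀ k, 1 ≤ k → k ≤ m → 0 < (-1:ℝ)^k * (P m).eval (r m k) := by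
        intro k h1 h2
        refine sgnP m k _ h2 ?_ ?_
        · intro i hi1 hi2
          have h3 := hple i k hi1 hi2 h2
          have h4 := hqp k h1 h2
          linarith [h4.1, h4.2]
        · intro i hi1 hi2
          have h3 := hple (k+1) i (by omega) hi1 hi2
          have h4 := hpr k h1 (by omega)
          linarith
      have sPq : ∀ k, 1 ≤ k → k ≤ m → 0 < (-1:ℝ)^k * (P m).eval (q m k) := by
        intro k h1 h2
        refine sgnP m k _ h2 ?_ ?_
        · intro i hi1 hi2
          have h3 := hple i k hi1 hi2 h2
          have h4 := (hqp k h1 h2).1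
          linarith
        · intro i hi1 hi2
          have h3 := hple (k+1) i (by omega) hi1 hi2
          have h4 := hpr k h1 (by omega)
          have h5 := (hqp k h1 h2).2
          linarith
      have sQr : ∀ k, 1 ≤ k → k ≤ m → 0 < (-1:ℝ)^k * (Q m).eval (r m k) := by
        intro k h1 h2
        refine sgnQ m k _ h2 ?_ ?_
        · intro i hi1 hi2
          have h3 := hqle i k hi1 hi2 h2
          have h4 := (hqp k h1 h2).2
          linarith
        · intro i hi1 hi2
          have h3 := hqle (k+1) i (by omega) hi1 hi2
          have h4 := hpr k h1 (by omega)
          have h5 := (hqp (k+1) (by omega) (by omega)).1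
          linarith
      have sRq : ∀ k, 1 ≤ k → k ≤ m → 0 < (-1:ℝ)^(k-1) * (R m).eval (q m k) := by
        intro k h1 h2
        refine sgnR m (k-1) _ (by omega) ?_ ?_
        · intro i hi1 hi2
          have h3 := hrle i (k-1) hi1 hi2 (by omega)
          have h4 := hpr (k-1) (by omega) (by omega)
          have h5 : k - 1 + 1 = k := by omega
          rw [h5] at h4
          have h6 := (hqp k h1 h2).1
          linarith
        · intro i hi1 hi2
          have h3 := hrle k i (by omega) (by omega) hi2
          have h4 := (hqp k h1 h2).2
          linarith
      -- ============ Step 1 : roots of P (m+1) ============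
      have evalF : ∀ x : ℝ, (P (m+1)).eval x = x * (R m).eval x + a m * (P m).eval x := by
        intro x; rw [hP m]; simp
      have sFq : ∀ k, 1 ≤ k → k ≤ m → 0 < (-1:ℝ)^k * (P (m+1)).eval (q m k) := by
        intro k h1 h2
        obtain ⟨k', rfl⟩ : ∃ k', k = k' + 1 := ⟨k - 1, by omega⟩
        have e1 : 0 < (-1:ℝ)^k' * (R m).eval (q m (k'+1)) := by
          have := sRq (k'+1) h1 h2
          simpa using this
        have e2 := sPq (k'+1) h1 h2
        have e3 := hqneg (k'+1) h1 h2
        rw [evalF]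
        have e4 : (-1:ℝ)^(k'+1) * (q m (k'+1) * (R m).eval (q m (k'+1))
              + a m * (P m).eval (q m (k'+1)))
            = (-(q m (k'+1))) * ((-1:ℝ)^k' * (R m).eval (q m (k'+1)))
              + a m * ((-1:ℝ)^(k'+1) * (P m).eval (q m (k'+1))) := by
          rw [pow_succ]; ring
        rw [e4]
        exact add_pos (mul_pos (by linarith) e1) (mul_pos (ha m) e2)
      have sFr : ∀ k, 1 ≤ k → k ≤ m → 0 < (-1:ℝ)^k * (P (m+1)).eval (r m k) := by
        intro k h1 h2
        rw [evalF]
        rw [hrroot m hm k h1 h2, mul_zero, zero_add]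
        have e4 : (-1:ℝ)^k * (a m * (P m).eval (r m k))
            = a m * ((-1:ℝ)^k * (P m).eval (r m k)) := by ring
        rw [e4]
        exact mul_pos (ha m) (sPr k h1 h2)
      have sF0 : 0 < (P (m+1)).eval 0 := (hposall (m+1) 0 le_rfl).1
      have hne : (Finset.Icc 1 (m+1)).Nonempty := ⟨1, by simp⟩
      obtain ⟨x0, hx0r, hx0p⟩ : ∃ x0, x0 < r m m ∧ ∀ i, 1 ≤ i → i ≤ m+1 → x0 < p (m+1) i := by
        refine ⟨min (r m m) ((Finset.Icc 1 (m+1)).inf' hne (p (m+1))) - 1, ?_, ?_⟩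
        · have := min_le_left (r m m) ((Finset.Icc 1 (m+1)).inf' hne (p (m+1)))
          linarith
        · intro i h1 h2
          have h3 : (Finset.Icc 1 (m+1)).inf' hne (p (m+1)) ≤ p (m+1) i :=
            Finset.inf'_le (p (m+1)) (by simp [Finset.mem_Icc]; omega)
          have := min_le_right (r m m) ((Finset.Icc 1 (m+1)).inf' hne (p (m+1)))
          linarith
      have sFx0 : 0 < (-1:ℝ)^(m+1) * (P (m+1)).eval x0 :=
        sgnP (m+1) (m+1) x0 le_rfl (fun k h1 h2 => hx0p k h1 h2) (fun k h1 h2 => by omega)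
      have locP := tri_locate (m+1) (P (m+1)) (p (m+1))
        (fun k => if k ≤ m then q m k else x0)
        (fun k => if k = 1 then 0 else r m (k-1))
        (hpall (m+1) (by omega)) (hpdec (m+1) (by omega))
        (by -- hLU
          intro k h1 h2
          by_cases hk1 : k = 1
          · subst hk1
            simp only [if_pos hm, if_pos rfl]
            exact hqneg 1 le_rfl hm
          · by_cases hkm : k ≤ m
            · simp only [if_pos hkm, if_neg hk1]
              have h4 := hpr (k-1) (by omega) (by omega)
              have h5 : k - 1 + 1 = k := by omega
              rw [h5] at h4
              have h6 := (hqp k (by omega) hkm).1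
              linarith
            · have hk : k = m + 1 := by omega
              subst hk
              simp only [if_neg hkm, if_neg hk1, Nat.add_sub_cancel]
              exact hx0r)
        (by -- hsep
          intro k h1 h2
          have hkm : k ≤ m := by omega
          simp only [if_pos hkm, if_neg (by omega : ¬ (k + 1 = 1)), Nat.add_sub_cancel]
          exact (hqp k h1 hkm).2.le)
        (by -- hsL
          intro k h1 h2
          by_cases hkm : k ≤ m
          · simp only [if_pos hkm]
            exact sFq k h1 hkm
          · have hk : k = m + 1 := by omega
            subst hk
            simp only [if_neg hkm]
            exact sFx0)
        (by -- hsU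
          intro k h1 h2
          by_cases hk1 : k = 1
          · subst hk1
            simpa using sF0
          · simp only [if_neg hk1]
            exact sFr (k-1) (by omega) (by omega))
      have Pa : ∀ k, 1 ≤ k → k ≤ m → q m k < p (m+1) k := by
        intro k h1 h2
        have h5 := (locP k h1 (by omega)).1
        simp only [if_pos h2] at h5
        exact h5
      have Pb : p (m+1) 1 < 0 := by
        have := (locP 1 le_rfl (by omega)).2
        simpa using this
      have Pc : ∀ k, 1 ≤ k → k ≤ m → p (m+1) (k+1) < r m k := by
        intro k h1 h2
        have h5 := (locP (k+1) (by omega) (by omega)).2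
        simp only [if_neg (show ¬ (k + 1 = 1) by omega), Nat.add_sub_cancel] at h5
        exact h5
      -- ============ Step 2 : roots of Q (m+1) ============
      have evalG : ∀ x : ℝ, (Q (m+1)).eval x = (P (m+1)).eval x + b m * (Q m).eval x := by
        intro x; rw [hQ m]; simp
      have sGq : ∀ k, 1 ≤ k → k ≤ m → 0 < (-1:ℝ)^k * (Q (m+1)).eval (q m k) := by
        intro k h1 h2
        rw [evalG, hqroot m hm k h1 h2, mul_zero, add_zero]
        exact sFq k h1 h2
      have sGp : ∀ k, 1 ≤ k → k ≤ m + 1 →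
          0 < (-1:ℝ)^(k-1) * (Q (m+1)).eval (p (m+1) k) := by
        intro k h1 h2
        have h0 : (P (m+1)).eval (p (m+1) k) = 0 := hproot (m+1) (by omega) k h1 h2
        rw [evalG, h0, zero_add]
        have hsq : 0 < (-1:ℝ)^(k-1) * (Q m).eval (p (m+1) k) := by
          refine sgnQ m (k-1) _ (by omega) ?_ ?_
          · intro i hi1 hi2
            have h3 := hqle i (k-1) hi1 hi2 (by omega)
            have h4 := Pc (k-1) (by omega) (by omega)
            have h5 : k - 1 + 1 = k := by omega
            rw [h5] at h4
            have h8 := (hqp (k-1) (by omega) (by omega)).2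
            linarith
          · intro i hi1 hi2
            have h3 := hqle k i (by omega) (by omega) hi2
            have h4 := Pa k (by omega) (by omega)
            linarith
        have e4 : (-1:ℝ)^(k-1) * (b m * (Q m).eval (p (m+1) k))
            = b m * ((-1:ℝ)^(k-1) * (Q m).eval (p (m+1) k)) := by ring
        rw [e4]
        exact mul_pos (hb m) hsq
      have sG0 : 0 < (Q (m+1)).eval 0 := (hposall (m+1) 0 le_rfl).2.1
      obtain ⟨x1, hx1p, hx1q⟩ : ∃ x1, x1 < p (m+1) (m+1) ∧
          ∀ i, 1 ≤ i → i ≤ m+1 → x1 < q (m+1) i := by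
        refine ⟨min (p (m+1) (m+1)) ((Finset.Icc 1 (m+1)).inf' hne (q (m+1))) - 1, ?_, ?_⟩
        · have := min_le_left (p (m+1) (m+1)) ((Finset.Icc 1 (m+1)).inf' hne (q (m+1)))
          linarith
        · intro i h1 h2
          have h3 : (Finset.Icc 1 (m+1)).inf' hne (q (m+1)) ≤ q (m+1) i :=
            Finset.inf'_le (q (m+1)) (by simp [Finset.mem_Icc]; omega)
          have := min_le_right (p (m+1) (m+1)) ((Finset.Icc 1 (m+1)).inf' hne (q (m+1)))
          linarith
      have sGx1 : 0 < (-1:ℝ)^(m+1) * (Q (m+1)).eval x1 :=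
        sgnQ (m+1) (m+1) x1 le_rfl (fun k h1 h2 => hx1q k h1 h2) (fun k h1 h2 => by omega)
      have locQ := tri_locate (m+1) (Q (m+1)) (q (m+1))
        (fun k => if k ≤ m then q m k else x1)
        (fun k => p (m+1) k)
        (hqall (m+1) (by omega)) (hqdec (m+1) (by omega))
        (by -- hLU
          intro k h1 h2
          by_cases hkm : k ≤ m
          · simp only [if_pos hkm]
            exact Pa k h1 hkm
          · have hk : k = m + 1 := by omega
            subst hk
            simp only [if_neg hkm]
            exact hx1p)
        (by -- hsep
          intro k h1 h2
          have hkm : k ≤ m := by omega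
          simp only [if_pos hkm]
          have h3 := Pc k h1 hkm
          have h4 := (hqp k h1 hkm).2
          linarith)
        (by -- hsL
          intro k h1 h2
          by_cases hkm : k ≤ m
          · simp only [if_pos hkm]
            exact sGq k h1 hkm
          · have hk : k = m + 1 := by omega
            subst hk
            simp only [if_neg hkm]
            exact sGx1)
        (by -- hsU
          intro k h1 h2
          exact sGp k h1 h2)
      have Qa : ∀ k, 1 ≤ k → k ≤ m + 1 → q (m+1) k < p (m+1) k := by
        intro k h1 h2
        have h5 := (locQ k h1 h2).2
        simpa using h5
      have Qb : ∀ k, 1 ≤ k → k ≤ m → q m k < q (m+1) k := by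
        intro k h1 h2
        have h5 := (locQ k h1 (by omega)).1
        simp only [if_pos h2] at h5
        exact h5
      -- ============ Step 3 : roots of R (m+1) ============
      have evalH : ∀ x : ℝ, (R (m+1)).eval x = (Q (m+1)).eval x + c m * (R m).eval x := by
        intro x; rw [hR m]; simp
      have sHr : ∀ k, 1 ≤ k → k ≤ m → 0 < (-1:ℝ)^k * (R (m+1)).eval (r m k) := by
        intro k h1 h2
        have h0 : (R m).eval (r m k) = 0 := hrroot m hm k h1 h2
        have e : (R (m+1)).eval (r m k)
            = a m * (P m).eval (r m k) + b m * (Q m).eval (r m k) := by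
          rw [evalH, h0, mul_zero, add_zero, evalG, evalF, h0, mul_zero, zero_add]
        rw [e]
        have e4 : (-1:ℝ)^k * (a m * (P m).eval (r m k) + b m * (Q m).eval (r m k))
            = a m * ((-1:ℝ)^k * (P m).eval (r m k))
              + b m * ((-1:ℝ)^k * (Q m).eval (r m k)) := by ring
        rw [e4]
        exact add_pos (mul_pos (ha m) (sPr k h1 h2)) (mul_pos (hb m) (sQr k h1 h2))
      have sHq : ∀ k, 1 ≤ k → k ≤ m + 1 →
          0 < (-1:ℝ)^(k-1) * (R (m+1)).eval (q (m+1) k) := by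
        intro k h1 h2
        have h0 : (Q (m+1)).eval (q (m+1) k) = 0 := hqroot (m+1) (by omega) k h1 h2
        rw [evalH, h0, zero_add]
        have hsr : 0 < (-1:ℝ)^(k-1) * (R m).eval (q (m+1) k) := by
          refine sgnR m (k-1) _ (by omega) ?_ ?_
          · intro i hi1 hi2
            have h3 := hrle i (k-1) hi1 hi2 (by omega)
            have h4 := Pc (k-1) (by omega) (by omega)
            have h5 : k - 1 + 1 = k := by omega
            rw [h5] at h4
            have h6 := Qa k h1 h2
            linarith
          · intro i hi1 hi2
            have h3 := hrle k i (by omega) (by omega) hi2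
            have h4 := (hqp k (by omega) (by omega)).2
            have h5 := Qb k (by omega) (by omega)
            linarith
        have e4 : (-1:ℝ)^(k-1) * (c m * (R m).eval (q (m+1) k))
            = c m * ((-1:ℝ)^(k-1) * (R m).eval (q (m+1) k)) := by ring
        rw [e4]
        exact mul_pos (hc m) hsr
      have sH0 : 0 < (R (m+1)).eval 0 := (hposall (m+1) 0 le_rfl).2.2
      obtain ⟨x2, hx2q, hx2r⟩ : ∃ x2, x2 < q (m+1) (m+1) ∧
          ∀ i, 1 ≤ i → i ≤ m+1 → x2 < r (m+1) i := by
        refine ⟨min (q (m+1) (m+1)) ((Finset.Icc 1 (m+1)).inf' hne (r (m+1))) - 1, ?_, ?_⟩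
        · have := min_le_left (q (m+1) (m+1)) ((Finset.Icc 1 (m+1)).inf' hne (r (m+1)))
          linarith
        · intro i h1 h2
          have h3 : (Finset.Icc 1 (m+1)).inf' hne (r (m+1)) ≤ r (m+1) i :=
            Finset.inf'_le (r (m+1)) (by simp [Finset.mem_Icc]; omega)
          have := min_le_right (q (m+1) (m+1)) ((Finset.Icc 1 (m+1)).inf' hne (r (m+1)))
          linarith
      have sHx2 : 0 < (-1:ℝ)^(m+1) * (R (m+1)).eval x2 :=
        sgnR (m+1) (m+1) x2 le_rfl (fun k h1 h2 => hx2r k h1 h2) (fun k h1 h2 => by omega)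
      have locR := tri_locate (m+1) (R (m+1)) (r (m+1))
        (fun k => if k ≤ m then r m k else x2)
        (fun k => q (m+1) k)
        (hrall (m+1) (by omega)) (hrdec (m+1) (by omega))
        (by -- hLU
          intro k h1 h2
          by_cases hkm : k ≤ m
          · simp only [if_pos hkm]
            have h3 := (hqp k h1 hkm).2
            have h4 := Qb k h1 hkm
            linarith
          · have hk : k = m + 1 := by omega
            subst hk
            simp only [if_neg hkm]
            exact hx2q)
        (by -- hsep
          intro k h1 h2
          have hkm : k ≤ m := by omega
          simp only [if_pos hkm]
          have h3 := Qa (k+1) (by omega) (by omega)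
          have h4 := Pc k h1 hkm
          linarith)
        (by -- hsL
          intro k h1 h2
          by_cases hkm : k ≤ m
          · simp only [if_pos hkm]
            exact sHr k h1 hkm
          · have hk : k = m + 1 := by omega
            subst hk
            simp only [if_neg hkm]
            exact sHx2)
        (by -- hsU
          intro k h1 h2
          exact sHq k h1 h2)
      have Ra : ∀ k, 1 ≤ k → k ≤ m + 1 → r (m+1) k < q (m+1) k := by
        intro k h1 h2
        have h5 := (locR k h1 h2).2
        simpa using h5
      have Rb : ∀ k, 1 ≤ k → k ≤ m → r m k < r (m+1) k := by
        intro k h1 h2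
        have h5 := (locR k h1 (by omega)).1
        simp only [if_pos h2] at h5
        exact h5
      -- assemble
      refine ⟨Pb, fun k h1 h2 => ⟨Qa k h1 h2, Ra k h1 h2⟩, fun k h1 h2 => ?_⟩
      have h3 := Pc k h1 (by omega)
      have h4 := Rb k h1 (by omega)
      linarith
  intro j hj
  obtain ⟨h1, h2, h3⟩ := main j hj
  exact ⟨h2, h3⟩
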